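/- arXiv:2011.05000 — 2 statements merged into one kernel-verified Lean document; each statement's English description precedes it below -/
import Mathlib

section
/- Rectangular complex interval multiplication has no zero divisors: if I, J are rectangular complex intervals with I·J = {0}, then I = {0} or J = {0}. -/
open Set Pointwise

noncomputable section

/-- Pointwise addition of sets of reals. -/
def sadd (X Y : Set ℝ) : Set ℝ := Set.image2 (· + ·) X Y

/-- Pointwise subtraction of sets of reals. -/
def ssub (X Y : Set ℝ) : Set ℝ := Set.image2 (· - ·) X Y

/-- Pointwise multiplication of sets of reals. -/
def smul' (X Y : Set ℝ) : Set ℝ := Set.image2 (· * ·) X Y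

/-- The rectangular complex interval `X + iY`. -/
def cI (X Y : Set ℝ) : Set ℂ := {z | z.re ∈ X ∧ z.im ∈ Y}

/-- Real parts of a set of complex numbers. -/
def reS (S : Set ℂ) : Set ℝ := Complex.re '' S

/-- Imaginary parts of a set of complex numbers. -/
def imS (S : Set ℂ) : Set ℝ := Complex.im '' S

/-- Complex interval multiplication:
`(X+iY)·(W+iZ) = (X·W − Y·Z) + i(X·Z + Y·W)`. -/
def cmul (S T : Set ℂ) : Set ℂ :=
  cI (ssub (smul' (reS S) (reS T)) (smul' (imS S) (imS T)))
     (sadd (smul' (reS S) (imS T)) (smul' (imS S) (reS T)))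

/-- `S` is a rectangular complex interval. -/
def IsRect (S : Set ℂ) : Prop :=
  ∃ a b c d : ℝ, a ≤ b ∧ c ≤ d ∧ S = cI (Set.Icc a b) (Set.Icc c d)


lemma reS_cI {X Y : Set ℝ} (hY : Y.Nonempty) : reS (cI X Y) = X := by
  ext x
  constructor
  · rintro ⟨z, ⟨hz1, _⟩, rfl⟩; exact hz1
  · intro hx
    obtain ⟨y, hy⟩ := hY
    exact ⟨⟨x, y⟩, ⟨hx, hy⟩, rfl⟩

lemma imS_cI {X Y : Set ℝ} (hX : X.Nonempty) : imS (cI X Y) = Y := by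
  ext y
  constructor
  · rintro ⟨z, ⟨_, hz2⟩, rfl⟩; exact hz2
  · intro hy
    obtain ⟨x, hx⟩ := hX
    exact ⟨⟨x, y⟩, ⟨hx, hy⟩, rfl⟩

theorem cmul_no_zero_divisors (I J : Set ℂ) (hI : IsRect I) (hJ : IsRect J)
    (h : cmul I J = {0}) : I = {0} ∨ J = {0} := by
  obtain ⟨a, b, c, d, hab, hcd, rfl⟩ := hI
  obtain ⟨e, f, g, k, hef, hgk, rfl⟩ := hJ
  have hA : (Set.Icc a b).Nonempty := Set.nonempty_Icc.2 hab
  have hB : (Set.Icc c d).Nonempty := Set.nonempty_Icc.2 hcd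
  have hC : (Set.Icc e f).Nonempty := Set.nonempty_Icc.2 hef
  have hD : (Set.Icc g k).Nonempty := Set.nonempty_Icc.2 hgk
  rw [cmul, reS_cI hB, imS_cI hA, reS_cI hD, imS_cI hC] at h
  have key : ∀ x ∈ Set.Icc a b, ∀ p ∈ Set.Icc c d, ∀ y ∈ Set.Icc e f, ∀ q ∈ Set.Icc g k,
      x * y - p * q = 0 ∧ x * q + p * y = 0 := by
    intro x hx p hp y hy q hq
    have h1 : x * y - p * q ∈ ssub (smul' (Set.Icc a b) (Set.Icc e f))
        (smul' (Set.Icc c d) (Set.Icc g k)) :=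
      Set.mem_image2_of_mem (Set.mem_image2_of_mem hx hy) (Set.mem_image2_of_mem hp hq)
    have h2 : x * q + p * y ∈ sadd (smul' (Set.Icc a b) (Set.Icc g k))
        (smul' (Set.Icc c d) (Set.Icc e f)) :=
      Set.mem_image2_of_mem (Set.mem_image2_of_mem hx hq) (Set.mem_image2_of_mem hp hy)
    have hz : (⟨x * y - p * q, x * q + p * y⟩ : ℂ) ∈ ({0} : Set ℂ) := by
      rw [← h]; exact ⟨h1, h2⟩
    have hz0 := Set.mem_singleton_iff.1 hz
    rw [Complex.ext_iff] at hz0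
    exact hz0
  by_cases hJ0 : cI (Set.Icc e f) (Set.Icc g k) = {0}
  · exact Or.inr hJ0
  · left
    have hJne : (cI (Set.Icc e f) (Set.Icc g k)).Nonempty :=
      ⟨⟨e, g⟩, ⟨Set.left_mem_Icc.2 hef, Set.left_mem_Icc.2 hgk⟩⟩
    have hex : ∃ z ∈ cI (Set.Icc e f) (Set.Icc g k), z ≠ 0 := by
      by_contra hc
      push_neg at hc
      exact hJ0 (hJne.subset_singleton_iff.1 hc)
    obtain ⟨z0, ⟨hy0, hq0⟩, hz0ne⟩ := hex
    have hne : z0.re ≠ 0 ∨ z0.im ≠ 0 := by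
      by_contra hc
      push_neg at hc
      exact hz0ne (Complex.ext hc.1 hc.2)
    have hzero : ∀ x ∈ Set.Icc a b, ∀ p ∈ Set.Icc c d, x = 0 ∧ p = 0 := by
      intro x hx p hp
      obtain ⟨h1, h2⟩ := key x hx p hp z0.re hy0 z0.im hq0
      have hsum : x ^ 2 + p ^ 2 = 0 := by
        rcases hne with hy | hq
        · have : (x ^ 2 + p ^ 2) * z0.re = 0 := by linear_combination x * h1 + p * h2
          exact (mul_eq_zero.1 this).resolve_right hy
        · have : (x ^ 2 + p ^ 2) * z0.im = 0 := by linear_combination x * h2 - p * h1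
          exact (mul_eq_zero.1 this).resolve_right hq
      constructor <;> nlinarith [sq_nonneg x, sq_nonneg p]
    have ha0 : a = 0 := (hzero a (Set.left_mem_Icc.2 hab) c (Set.left_mem_Icc.2 hcd)).1
    have hb0 : b = 0 := (hzero b (Set.right_mem_Icc.2 hab) c (Set.left_mem_Icc.2 hcd)).1
    have hc0 : c = 0 := (hzero a (Set.left_mem_Icc.2 hab) c (Set.left_mem_Icc.2 hcd)).2
    have hd0 : d = 0 := (hzero a (Set.left_mem_Icc.2 hab) d (Set.right_mem_Icc.2 hcd)).2
    subst ha0 hb0 hc0 hd0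
    ext z
    constructor
    · rintro ⟨hx, hp⟩
      rw [Set.Icc_self, Set.mem_singleton_iff] at hx hp
      exact Set.mem_singleton_iff.2 (Complex.ext hx hp)
    · intro hz
      rw [Set.mem_singleton_iff] at hz
      subst hz
      exact ⟨Set.left_mem_Icc.2 le_rfl, Set.left_mem_Icc.2 le_rfl⟩
end
end

section
/- (Krawczyk uniqueness) With the setting of Krawczyk's theorem, if additionally √2 · ‖1ₙ − Y·□JF(I)‖_∞ < 1, where ‖A‖_∞ = max over matrices B ∈ A of the operator ∞-norm of B, then F has exactly one zero in I. -/
open Set Pointwise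

noncomputable section

variable {n : ℕ}

/-- The interval vector `I ∈ 𝕀ℂⁿ` determined by coordinate intervals `IV`. -/
def boxSet (IV : Fin n → Set ℂ) : Set (Fin n → ℂ) := {z | ∀ j, z j ∈ IV j}

/-- `F` is a square polynomial system. -/
def IsPolyMap (F : (Fin n → ℂ) → Fin n → ℂ) : Prop :=
  ∀ i, ∃ p : MvPolynomial (Fin n) ℂ, ∀ z, F z i = MvPolynomial.eval z p

/-- The Jacobian matrix `JF(z)` of `F` at `z`. -/
def jac (F : (Fin n → ℂ) → Fin n → ℂ) (z : Fin n → ℂ) : Matrix (Fin n) (Fin n) ℂ :=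
  fun i j => fderiv ℂ (fun w => F w i) z (Pi.single j 1)

/-- Entries of the interval matrix `1ₙ − Y·□JF(I)`, where `MJ` is the interval
enclosure of the Jacobian on `I`, computed in complex interval arithmetic. -/
def Bmat (Y : Matrix (Fin n) (Fin n) ℂ) (MJ : Fin n → Fin n → Set ℂ) :
    Fin n → Fin n → Set ℂ :=
  fun i j => ({(if i = j then (1 : ℂ) else 0)} : Set ℂ) - ∑ k, cmul {Y i k} (MJ k j)

/-- Coordinates of the Krawczyk set
`K_{x,Y}(I) = x − Y·□F(x) + (1ₙ − Y·□JF(I))(I − x)`, where `FX` is the interval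
enclosure `□F(x)` and `MJ` the interval enclosure `□JF(I)`. -/
def Kset (x : Fin n → ℂ) (Y : Matrix (Fin n) (Fin n) ℂ)
    (FX : Fin n → Set ℂ) (MJ : Fin n → Fin n → Set ℂ) (IV : Fin n → Set ℂ) :
    Fin n → Set ℂ :=
  fun i => (({x i} : Set ℂ) - ∑ j, cmul {Y i j} (FX j)) +
      ∑ j, cmul ((IV j) - {x j}) (Bmat Y MJ i j)

/-- The `∞`-operator norm of a complex matrix (`Fin n → ℂ` carries the max norm). -/
def opNormInf (M : Matrix (Fin n) (Fin n) ℂ) : ℝ :=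
  sSup {r | ∃ v : Fin n → ℂ, ‖v‖ = 1 ∧ r = ‖M.mulVec v‖}

/-- The norm `‖A‖_∞` of an interval matrix: the maximum of the `∞`-operator norms
over all matrices contained in it. -/
def imatNorm (B : Fin n → Fin n → Set ℂ) : ℝ :=
  sSup {r | ∃ M : Matrix (Fin n) (Fin n) ℂ, (∀ i j, M i j ∈ B i j) ∧ r = opNormInf M}


section Lemmas
variable {n : ℕ}

lemma isRect_nonempty {S : Set ℂ} (h : IsRect S) : S.Nonempty := by
  obtain ⟨a, b, c, d, hab, hcd, rfl⟩ := h
  exact ⟨⟨a, c⟩, ⟨⟨le_refl a, hab⟩, ⟨le_refl c, hcd⟩⟩⟩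

lemma isRect_convex {S : Set ℂ} (h : IsRect S) : Convex ℝ S := by
  obtain ⟨a, b, c, d, _, _, rfl⟩ := h
  intro z hz w hw s t hs ht hst
  constructor
  · simpa [Complex.add_re, Complex.smul_re] using
      (convex_Icc a b) hz.1 hw.1 hs ht hst
  · simpa [Complex.add_im, Complex.smul_im] using
      (convex_Icc c d) hz.2 hw.2 hs ht hst

lemma isRect_closed {S : Set ℂ} (h : IsRect S) : IsClosed S := by
  obtain ⟨a, b, c, d, _, _, rfl⟩ := h
  have : cI (Set.Icc a b) (Set.Icc c d)
      = Complex.re ⁻¹' (Set.Icc a b) ∩ Complex.im ⁻¹' (Set.Icc c d) := rfl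
  rw [this]
  exact (isClosed_Icc.preimage Complex.continuous_re).inter
    (isClosed_Icc.preimage Complex.continuous_im)

lemma isRect_bounded {S : Set ℂ} (h : IsRect S) : ∃ C, 0 ≤ C ∧ ∀ z ∈ S, ‖z‖ ≤ C := by
  obtain ⟨a, b, c, d, _, _, rfl⟩ := h
  refine ⟨|a| + |b| + |c| + |d|, by positivity, fun z hz => ?_⟩
  obtain ⟨⟨h1, h2⟩, ⟨h3, h4⟩⟩ := hz
  have := Complex.norm_le_abs_re_add_abs_im z
  have hre : |z.re| ≤ |a| + |b| :=
    abs_le.2 ⟨by linarith [neg_abs_le a, abs_nonneg b], by linarith [le_abs_self b, abs_nonneg a]⟩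
  have him : |z.im| ≤ |c| + |d| :=
    abs_le.2 ⟨by linarith [neg_abs_le c, abs_nonneg d], by linarith [le_abs_self d, abs_nonneg c]⟩
  linarith

lemma mem_cmul {a b : ℂ} {S T : Set ℂ} (ha : a ∈ S) (hb : b ∈ T) : a * b ∈ cmul S T := by
  constructor
  · rw [Complex.mul_re]
    exact Set.mem_image2_of_mem
      (Set.mem_image2_of_mem ⟨a, ha, rfl⟩ ⟨b, hb, rfl⟩)
      (Set.mem_image2_of_mem ⟨a, ha, rfl⟩ ⟨b, hb, rfl⟩)
  · rw [Complex.mul_im]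
    exact Set.mem_image2_of_mem
      (Set.mem_image2_of_mem ⟨a, ha, rfl⟩ ⟨b, hb, rfl⟩)
      (Set.mem_image2_of_mem ⟨a, ha, rfl⟩ ⟨b, hb, rfl⟩)

open Pointwise in
lemma mem_finsetSum {ι : Type*} (s : Finset ι) (f : ι → ℂ) (S : ι → Set ℂ)
    (h : ∀ j ∈ s, f j ∈ S j) : (∑ j ∈ s, f j) ∈ (∑ j ∈ s, S j) := by
  classical
  induction s using Finset.induction_on with
  | empty => simp
  | insert _ _ hnot ih =>
    rename_i a s
    rw [Finset.sum_insert hnot, Finset.sum_insert hnot]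
    exact Set.add_mem_add (h a (Finset.mem_insert_self a s))
      (ih fun j hj => h j (Finset.mem_insert_of_mem hj))

end Lemmas

section Norms
variable {n : ℕ}

lemma mulVec_norm_le_rowsum (M : Matrix (Fin n) (Fin n) ℂ) (v : Fin n → ℂ)
    (C : ℝ) (hC : 0 ≤ C) (hrow : ∀ i, ∑ j, ‖M i j‖ ≤ C) :
    ‖M.mulVec v‖ ≤ C * ‖v‖ := by
  rw [show M.mulVec v = fun i => ∑ j, M i j * v j from rfl]
  refine (pi_norm_le_iff_of_nonneg (by positivity)).2 fun i => ?_
  calc ‖∑ j, M i j * v j‖ ≤ ∑ j, ‖M i j * v j‖ := norm_sum_le _ _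
    _ ≤ ∑ j, ‖M i j‖ * ‖v‖ := by
        refine Finset.sum_le_sum fun j _ => ?_
        rw [norm_mul]
        exact mul_le_mul_of_nonneg_left (norm_le_pi_norm v j) (norm_nonneg _)
    _ = (∑ j, ‖M i j‖) * ‖v‖ := (Finset.sum_mul _ _ _).symm
    _ ≤ C * ‖v‖ := mul_le_mul_of_nonneg_right (hrow i) (norm_nonneg _)

lemma opNormInf_le (M : Matrix (Fin n) (Fin n) ℂ)
    (C : ℝ) (hC : 0 ≤ C) (hrow : ∀ i, ∑ j, ‖M i j‖ ≤ C) : opNormInf M ≤ C := by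
  refine Real.sSup_le ?_ hC
  rintro r ⟨v, hv, rfl⟩
  have := mulVec_norm_le_rowsum M v C hC hrow
  rw [hv, mul_one] at this
  exact this

lemma opNormInf_bddAbove (M : Matrix (Fin n) (Fin n) ℂ) :
    BddAbove {r | ∃ v : Fin n → ℂ, ‖v‖ = 1 ∧ r = ‖M.mulVec v‖} := by
  refine ⟨∑ i, ∑ j, ‖M i j‖, ?_⟩
  rintro r ⟨v, hv, rfl⟩
  have hrow : ∀ i, ∑ j, ‖M i j‖ ≤ ∑ i, ∑ j, ‖M i j‖ := fun i =>
    Finset.single_le_sum (fun i _ => Finset.sum_nonneg fun j _ => norm_nonneg _)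
      (Finset.mem_univ i)
  have := mulVec_norm_le_rowsum M v _ (Finset.sum_nonneg fun i _ =>
    Finset.sum_nonneg fun j _ => norm_nonneg _) hrow
  rw [hv, mul_one] at this
  exact this

lemma norm_mulVec_le_opNormInf (M : Matrix (Fin n) (Fin n) ℂ) (v : Fin n → ℂ) :
    ‖M.mulVec v‖ ≤ opNormInf M * ‖v‖ := by
  rcases eq_or_ne v 0 with rfl | hv
  · simp [Matrix.mulVec_zero]
  · have hnv : (0:ℝ) < ‖v‖ := norm_pos_iff.2 hv
    set u : Fin n → ℂ := ((‖v‖⁻¹ : ℝ) : ℂ) • v with hu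
    have hun : ‖u‖ = 1 := by
      rw [hu, norm_smul]
      simp [norm_inv, abs_of_pos hnv, inv_mul_cancel₀ hnv.ne']
    have hmem : ‖M.mulVec u‖ ∈ {r | ∃ v : Fin n → ℂ, ‖v‖ = 1 ∧ r = ‖M.mulVec v‖} :=
      ⟨u, hun, rfl⟩
    have hle : ‖M.mulVec u‖ ≤ opNormInf M := le_csSup (opNormInf_bddAbove M) hmem
    have hmv : M.mulVec u = ((‖v‖⁻¹ : ℝ) : ℂ) • M.mulVec v := by
      rw [hu, Matrix.mulVec_smul]
    have : ‖M.mulVec u‖ = ‖v‖⁻¹ * ‖M.mulVec v‖ := by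
      rw [hmv, norm_smul]; simp [abs_of_pos hnv]
    rw [this] at hle
    calc ‖M.mulVec v‖ = ‖v‖ * (‖v‖⁻¹ * ‖M.mulVec v‖) := by
          field_simp
      _ ≤ ‖v‖ * opNormInf M := mul_le_mul_of_nonneg_left hle hnv.le
      _ = opNormInf M * ‖v‖ := mul_comm _ _

lemma opNormInf_le_imatNorm (B : Fin n → Fin n → Set ℂ)
    (C : ℝ) (hC : 0 ≤ C) (hB : ∀ i j, ∀ a ∈ B i j, ‖a‖ ≤ C)
    (M : Matrix (Fin n) (Fin n) ℂ) (hM : ∀ i j, M i j ∈ B i j) :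
    opNormInf M ≤ imatNorm B := by
  refine le_csSup ⟨(n : ℝ) * C, ?_⟩ ⟨M, hM, rfl⟩
  rintro r ⟨M', hM', rfl⟩
  refine opNormInf_le M' _ (by positivity) fun i => ?_
  calc ∑ j, ‖M' i j‖ ≤ ∑ _j : Fin n, C := Finset.sum_le_sum fun j _ => hB i j _ (hM' i j)
    _ = (n : ℝ) * C := by simp [Finset.sum_const, Finset.card_univ, mul_comm]

lemma cmul_bounded {S T : Set ℂ} {C D : ℝ} (hC : 0 ≤ C) (hD : 0 ≤ D)
    (hS : ∀ a ∈ S, ‖a‖ ≤ C) (hT : ∀ a ∈ T, ‖a‖ ≤ D) :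
    ∀ z ∈ cmul S T, ‖z‖ ≤ 4 * C * D := by
  have key : ∀ (f g : ℂ → ℝ) (r : ℝ), (∀ a ∈ S, |f a| ≤ C) → (∀ b ∈ T, |g b| ≤ D) →
      r ∈ smul' (f '' S) (g '' T) → |r| ≤ C * D := by
    rintro f g r hf hg ⟨p, hp, q, hq, rfl⟩
    obtain ⟨a, ha, rfl⟩ := hp
    obtain ⟨b, hb, rfl⟩ := hq
    rw [abs_mul]
    exact mul_le_mul (hf a ha) (hg b hb) (abs_nonneg _) hC
  rintro z ⟨hre, him⟩
  obtain ⟨p, hp, q, hq, hpq⟩ := hre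
  obtain ⟨p', hp', q', hq', hpq'⟩ := him
  have hfre : ∀ a ∈ S, |Complex.re a| ≤ C := fun a ha =>
    (Complex.abs_re_le_norm a).trans (hS a ha)
  have hfim : ∀ a ∈ S, |Complex.im a| ≤ C := fun a ha =>
    (Complex.abs_im_le_norm a).trans (hS a ha)
  have hgre : ∀ b ∈ T, |Complex.re b| ≤ D := fun b hb =>
    (Complex.abs_re_le_norm b).trans (hT b hb)
  have hgim : ∀ b ∈ T, |Complex.im b| ≤ D := fun b hb =>
    (Complex.abs_im_le_norm b).trans (hT b hb)
  have h1 : |p| ≤ C * D := key _ _ _ hfre hgre hp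
  have h2 : |q| ≤ C * D := key _ _ _ hfim hgim hq
  have h3 : |p'| ≤ C * D := key _ _ _ hfre hgim hp'
  have h4 : |q'| ≤ C * D := key _ _ _ hfim hgre hq'
  have : ‖z‖ ≤ |z.re| + |z.im| := by
    exact Complex.norm_le_abs_re_add_abs_im z
  have e1 : |z.re| ≤ 2 * (C * D) := by
    rw [← hpq]; calc |p - q| ≤ |p| + |q| := abs_sub _ _
      _ ≤ 2 * (C * D) := by linarith
  have e2 : |z.im| ≤ 2 * (C * D) := by
    rw [← hpq']; calc |p' + q'| ≤ |p'| + |q'| := abs_add_le _ _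
      _ ≤ 2 * (C * D) := by linarith
  linarith

open Pointwise in
lemma finsetSum_set_bound {ι : Type*} (s : Finset ι) (S : ι → Set ℂ) (D : ℝ) (hD : 0 ≤ D)
    (h : ∀ k ∈ s, ∀ a ∈ S k, ‖a‖ ≤ D) :
    ∀ a ∈ (∑ k ∈ s, S k), ‖a‖ ≤ s.card * D := by
  classical
  induction s using Finset.induction_on with
  | empty => intro a ha; simp only [Finset.sum_empty, Set.mem_zero] at ha; simp [ha]
  | insert _ _ hnot ih =>
    rename_i c s
    intro a ha
    rw [Finset.sum_insert hnot] at ha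
    obtain ⟨b, hb, e, he, rfl⟩ := ha
    have h1 : ‖b‖ ≤ D := h c (Finset.mem_insert_self c s) b hb
    have h2 : ‖e‖ ≤ s.card * D := ih (fun k hk => h k (Finset.mem_insert_of_mem hk)) e he
    calc ‖b + e‖ ≤ ‖b‖ + ‖e‖ := norm_add_le _ _
      _ ≤ D + s.card * D := by linarith
      _ = (s.card + 1 : ℕ) * D := by push_cast; ring
      _ = (insert c s).card * D := by rw [Finset.card_insert_of_notMem hnot]

open Pointwise in
lemma bmat_bounded {n : ℕ} (Y : Matrix (Fin n) (Fin n) ℂ) (MJ : Fin n → Fin n → Set ℂ)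
    (hMJr : ∀ i j, IsRect (MJ i j)) :
    ∃ C, 0 ≤ C ∧ ∀ i j, ∀ a ∈ Bmat Y MJ i j, ‖a‖ ≤ C := by
  classical
  choose Dm hDm0 hDm using fun p : Fin n × Fin n => isRect_bounded (hMJr p.1 p.2)
  set CM : ℝ := ∑ p : Fin n × Fin n, Dm p with hCM
  have hCM0 : 0 ≤ CM := Finset.sum_nonneg fun p _ => hDm0 p
  have hDmCM : ∀ p, Dm p ≤ CM := fun p =>
    Finset.single_le_sum (fun q _ => hDm0 q) (Finset.mem_univ p)
  set CY : ℝ := ∑ i, ∑ k, ‖Y i k‖ with hCY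
  have hCY0 : 0 ≤ CY := Finset.sum_nonneg fun i _ => Finset.sum_nonneg fun k _ => norm_nonneg _
  have hYCY : ∀ i k, ‖Y i k‖ ≤ CY := fun i k =>
    le_trans (Finset.single_le_sum (fun j _ => norm_nonneg _) (Finset.mem_univ k))
      (Finset.single_le_sum (fun j _ => Finset.sum_nonneg fun l _ => norm_nonneg _)
        (Finset.mem_univ i))
  refine ⟨1 + n * (4 * CY * CM), by positivity, fun i j a ha => ?_⟩
  obtain ⟨b, hb, e, he, rfl⟩ := ha
  have hbn : ‖b‖ ≤ 1 := by
    rw [Set.mem_singleton_iff] at hb; subst hb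
    split <;> simp
  have hen : ‖e‖ ≤ n * (4 * CY * CM) := by
    have := finsetSum_set_bound Finset.univ (fun k => cmul {Y i k} (MJ k j))
      (4 * CY * CM) (by positivity) (fun k _ => ?_) e he
    · simpa using this
    · intro a ha
      refine cmul_bounded hCY0 hCM0 ?_ ?_ a ha
      · intro z hz; rw [Set.mem_singleton_iff] at hz; subst hz; exact hYCY i k
      · intro z hz; exact le_trans (hDm ⟨k, j⟩ z hz) (hDmCM ⟨k, j⟩)
  calc ‖b - e‖ ≤ ‖b‖ + ‖e‖ := norm_sub_le _ _
    _ ≤ 1 + n * (4 * CY * CM) := by linarith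

open MeasureTheory in
lemma polymap_mvt {n : ℕ} (F : (Fin n → ℂ) → Fin n → ℂ) (hF : IsPolyMap F)
    (IV : Fin n → Set ℂ) (MJ : Fin n → Fin n → Set ℂ) (hMJr : ∀ i j, IsRect (MJ i j))
    (hMJ : ∀ z ∈ boxSet IV, ∀ i j, jac F z i j ∈ MJ i j)
    (w z : Fin n → ℂ) (hseg : ∀ t ∈ Set.Icc (0:ℝ) 1, (w + t • (z - w)) ∈ boxSet IV) :
    ∃ M : Matrix (Fin n) (Fin n) ℂ, (∀ i j, M i j ∈ MJ i j) ∧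
      ∀ i, F z i - F w i = ∑ j, M i j * (z j - w j) := by
  classical
  set γ : ℝ → (Fin n → ℂ) := fun t => w + t • (z - w) with hγdef
  have hγcont : Continuous γ := by
    apply Continuous.add continuous_const
    exact continuous_id.smul continuous_const
  have hγderiv : ∀ t : ℝ, HasDerivAt γ (z - w) t := by
    intro t
    have h1 : HasDerivAt (fun t : ℝ => t • (z - w)) ((1:ℝ) • (z - w)) t :=
      (hasDerivAt_id t).smul_const (z - w)
    rw [one_smul] at h1
    exact h1.const_add w
  -- jac entries along γ are continuous
  have hjaccont : ∀ i j, Continuous (fun t => jac F (γ t) i j) := by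
    intro i j
    obtain ⟨p, hp⟩ := hF i
    have hFi : (fun v => F v i) = fun v => MvPolynomial.eval v p := funext hp
    have hA : AnalyticOnNhd ℂ (fun v => MvPolynomial.eval v p) Set.univ :=
      AnalyticOnNhd.eval_mvPolynomial p
    have hdA : AnalyticOnNhd ℂ (fderiv ℂ (fun v => MvPolynomial.eval v p)) Set.univ := hA.fderiv
    have hcont : Continuous (fderiv ℂ (fun v => MvPolynomial.eval v p)) := by
      rw [continuous_iff_continuousAt]
      exact fun v => (hdA v (Set.mem_univ v)).continuousAt
    have : Continuous (fun v => fderiv ℂ (fun u => MvPolynomial.eval u p) v (Pi.single j 1)) :=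
      hcont.clm_apply continuous_const
    simpa [jac, hFi, Function.comp_def] using this.comp hγcont
  have hjacmem : ∀ i j, ∀ t ∈ Set.Icc (0:ℝ) 1, jac F (γ t) i j ∈ MJ i j :=
    fun i j t ht => hMJ _ (hseg t ht) i j
  -- the mean value matrix
  set M : Matrix (Fin n) (Fin n) ℂ :=
    fun i j => ∫ t in Set.Icc (0:ℝ) 1, jac F (γ t) i j with hMdef
  haveI : IsProbabilityMeasure (volume.restrict (Set.Icc (0:ℝ) 1)) := by
    constructor
    rw [Measure.restrict_apply_univ]
    simp [Real.volume_Icc]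
  have hMmem : ∀ i j, M i j ∈ MJ i j := by
    intro i j
    refine Convex.integral_mem (isRect_convex (hMJr i j)) (isRect_closed (hMJr i j)) ?_ ?_
    · exact (ae_restrict_iff' measurableSet_Icc).2
        (Filter.Eventually.of_forall fun t ht => hjacmem i j t ht)
    · exact (hjaccont i j).integrableOn_Icc
  refine ⟨M, hMmem, fun i => ?_⟩
  obtain ⟨p, hp⟩ := hF i
  have hFi : (fun v => F v i) = fun v => MvPolynomial.eval v p := funext hp
  have hA : AnalyticOnNhd ℂ (fun v => MvPolynomial.eval v p) Set.univ :=
    AnalyticOnNhd.eval_mvPolynomial p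
  have hdF : Differentiable ℂ (fun v => MvPolynomial.eval v p) :=
    fun v => (hA v (Set.mem_univ v)).differentiableAt
  have hjac_eq : ∀ v j, jac F v i j =
      fderiv ℂ (fun u => MvPolynomial.eval u p) v (Pi.single j 1) := by
    intro v j; rw [jac, hFi]
  -- derivative of t ↦ F (γ t) i
  have hgderiv : ∀ t : ℝ, HasDerivAt (fun t => MvPolynomial.eval (γ t) p)
      (∑ j, (z j - w j) * jac F (γ t) i j) t := by
    intro t
    have h2 := ((hdF (γ t)).hasFDerivAt.restrictScalars ℝ).comp_hasDerivAt t (hγderiv t)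
    have hv : (z - w) = ∑ j, (z j - w j) • (Pi.single j 1 : Fin n → ℂ) := by
      have := Finset.univ_sum_single (z - w)
      rw [← this]
      refine Finset.sum_congr rfl fun j _ => ?_
      rw [← Pi.single_smul, smul_eq_mul, mul_one]
      rfl
    have h3 : fderiv ℂ (fun u => MvPolynomial.eval u p) (γ t) (z - w)
        = ∑ j, (z j - w j) * jac F (γ t) i j := by
      rw [hv, map_sum]
      refine Finset.sum_congr rfl fun j _ => ?_
      rw [ContinuousLinearMap.map_smul, smul_eq_mul, hjac_eq]
    rw [← h3]
    exact h2
  -- FTC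
  have hintcont : Continuous (fun t => ∑ j, (z j - w j) * jac F (γ t) i j) :=
    continuous_finset_sum _ fun j _ => continuous_const.mul (hjaccont i j)
  have hFTC : (∫ t in (0:ℝ)..1, ∑ j, (z j - w j) * jac F (γ t) i j)
      = MvPolynomial.eval (γ 1) p - MvPolynomial.eval (γ 0) p := by
    refine intervalIntegral.integral_eq_sub_of_hasDerivAt (fun t _ => hgderiv t) ?_
    exact hintcont.intervalIntegrable 0 1
  have hγ0 : γ 0 = w := by simp [hγdef]
  have hγ1 : γ 1 = z := by
    funext j; simp [hγdef]
  rw [hγ0, hγ1] at hFTC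
  have hswap : (∫ t in (0:ℝ)..1, ∑ j, (z j - w j) * jac F (γ t) i j)
      = ∑ j, (z j - w j) * M i j := by
    rw [intervalIntegral.integral_finset_sum]
    · refine Finset.sum_congr rfl fun j _ => ?_
      rw [intervalIntegral.integral_const_mul, hMdef]
      congr 1
      rw [intervalIntegral.integral_of_le zero_le_one,
        ← MeasureTheory.integral_Icc_eq_integral_Ioc]
    · exact fun j _ => (continuous_const.mul (hjaccont i j)).intervalIntegrable 0 1
  rw [hswap] at hFTC
  rw [hp z, hp w, ← hFTC]
  exact Finset.sum_congr rfl fun j _ => mul_comm _ _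

lemma key_sum {n : ℕ} (Y M : Matrix (Fin n) (Fin n) ℂ) (v : Fin n → ℂ) (i : Fin n) :
    v i - ∑ j, Y i j * (∑ k, M j k * v k)
      = ∑ k, ((if i = k then 1 else 0) - ∑ j, Y i j * M j k) * v k := by
  have h1 : ∑ k, (if i = k then (1:ℂ) else 0) * v k = v i := by
    simp [ite_mul]
  have h2 : ∑ k, (∑ j, Y i j * M j k) * v k = ∑ j, Y i j * ∑ k, M j k * v k := by
    calc ∑ k, (∑ j, Y i j * M j k) * v k = ∑ k, ∑ j, Y i j * M j k * v k := by
          simp [Finset.sum_mul]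
      _ = ∑ j, ∑ k, Y i j * M j k * v k := Finset.sum_comm
      _ = ∑ j, Y i j * ∑ k, M j k * v k := by
          simp [Finset.mul_sum, mul_assoc]
  calc v i - ∑ j, Y i j * (∑ k, M j k * v k)
      = (∑ k, (if i = k then (1:ℂ) else 0) * v k) - ∑ k, (∑ j, Y i j * M j k) * v k := by
        rw [h1, h2]
    _ = ∑ k, ((if i = k then (1:ℂ) else 0) * v k - (∑ j, Y i j * M j k) * v k) :=
        (Finset.sum_sub_distrib _ _).symm
    _ = ∑ k, ((if i = k then 1 else 0) - ∑ j, Y i j * M j k) * v k := by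
        refine Finset.sum_congr rfl fun k _ => ?_
        ring

lemma boxSet_seg {n : ℕ} {IV : Fin n → Set ℂ} (hIV : ∀ j, IsRect (IV j))
    {w z : Fin n → ℂ} (hw : w ∈ boxSet IV) (hz : z ∈ boxSet IV) :
    ∀ t ∈ Set.Icc (0:ℝ) 1, (w + t • (z - w)) ∈ boxSet IV := by
  intro t ht j
  have hconv := isRect_convex (hIV j) (hw j) (hz j)
    (by linarith [ht.2] : (0:ℝ) ≤ 1 - t) ht.1 (by ring)
  have e : (w + t • (z - w)) j = (1 - t) • w j + t • z j := by
    show w j + t • (z j - w j) = (1 - t) • w j + t • z j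
    rw [smul_sub, sub_smul, one_smul]
    abel
  rw [e]
  exact hconv

theorem krawczyk_uniqueness' {n : ℕ} (F : (Fin n → ℂ) → Fin n → ℂ) (hF : IsPolyMap F)
    (IV : Fin n → Set ℂ) (hIV : ∀ j, IsRect (IV j))
    (x : Fin n → ℂ) (hx : x ∈ boxSet IV)
    (Y : Matrix (Fin n) (Fin n) ℂ) (hY : IsUnit Y)
    (FX : Fin n → Set ℂ) (hFXr : ∀ j, IsRect (FX j)) (hFX : ∀ j, F x j ∈ FX j)
    (MJ : Fin n → Fin n → Set ℂ) (hMJr : ∀ i j, IsRect (MJ i j))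
    (hMJ : ∀ z ∈ boxSet IV, ∀ i j, jac F z i j ∈ MJ i j)
    (hK : ∀ i, Kset x Y FX MJ IV i ⊆ IV i)
    (hnorm : Real.sqrt 2 * imatNorm (Bmat Y MJ) < 1) :
    ∃! z, z ∈ boxSet IV ∧ F z = 0 := by
  classical
  set κ : ℝ := imatNorm (Bmat Y MJ) with hκdef
  have hsqrt : (1:ℝ) ≤ Real.sqrt 2 := by
    rw [show (1:ℝ) = Real.sqrt 1 from (Real.sqrt_one).symm]
    exact Real.sqrt_le_sqrt (by norm_num)
  have hκ1 : κ < 1 := by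
    by_contra h
    push_neg at h
    nlinarith
  set G : (Fin n → ℂ) → Fin n → ℂ := fun z => z - Y.mulVec (F z) with hGdef
  have hGapply : ∀ z i, G z i = z i - ∑ j, Y i j * F z j := by
    intro z i
    show z i - (Y.mulVec (F z)) i = _
    rw [Matrix.mulVec, dotProduct]
  obtain ⟨CB, hCB0, hCB⟩ := bmat_bounded Y MJ hMJr
  -- G maps boxSet into itself
  have hGmem : ∀ z ∈ boxSet IV, G z ∈ boxSet IV := by
    intro z hz
    obtain ⟨M, hM, hMeq⟩ := polymap_mvt F hF IV MJ hMJr hMJ x z (boxSet_seg hIV hx hz)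
    intro i
    apply hK i
    have e2 : ∀ j, F z j = F x j + ∑ k, M j k * (z k - x k) :=
      fun j => sub_eq_iff_eq_add'.mp (hMeq j)
    have hks : (z i - x i) - ∑ j, Y i j * ∑ k, M j k * (z k - x k)
        = ∑ k, ((if i = k then 1 else 0) - ∑ j, Y i j * M j k) * (z k - x k) :=
      key_sum Y M (fun k => z k - x k) i
    have hGz : G z i = (x i - ∑ j, Y i j * F x j) +
        ∑ k, (z k - x k) * ((if i = k then 1 else 0) - ∑ j, Y i j * M j k) := by
      calc G z i = z i - ∑ j, Y i j * F z j := hGapply z i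
        _ = z i - ∑ j, Y i j * (F x j + ∑ k, M j k * (z k - x k)) := by
            congr 1
            exact Finset.sum_congr rfl fun j _ => by rw [e2 j]
        _ = (x i - ∑ j, Y i j * F x j) +
            ((z i - x i) - ∑ j, Y i j * ∑ k, M j k * (z k - x k)) := by
            simp only [mul_add, Finset.sum_add_distrib]
            ring
        _ = (x i - ∑ j, Y i j * F x j) +
            ∑ k, ((if i = k then 1 else 0) - ∑ j, Y i j * M j k) * (z k - x k) := by
            rw [hks]
        _ = (x i - ∑ j, Y i j * F x j) +
            ∑ k, (z k - x k) * ((if i = k then 1 else 0) - ∑ j, Y i j * M j k) := by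
            congr 1
            exact Finset.sum_congr rfl fun k _ => mul_comm _ _
    rw [hGz]
    refine Set.add_mem_add ?_ ?_
    · exact Set.sub_mem_sub (Set.mem_singleton _)
        (mem_finsetSum _ _ _ fun j _ => mem_cmul (Set.mem_singleton _) (hFX j))
    · refine mem_finsetSum _ _ _ fun k _ => mem_cmul ?_ ?_
      · exact Set.sub_mem_sub (hz k) (Set.mem_singleton _)
      · exact Set.sub_mem_sub (Set.mem_singleton _)
          (mem_finsetSum _ _ _ fun j _ => mem_cmul (Set.mem_singleton _) (hM j k))
  -- Lipschitz bound
  have hGlip : ∀ z ∈ boxSet IV, ∀ w ∈ boxSet IV, ‖G z - G w‖ ≤ κ * ‖z - w‖ := by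
    intro z hz w hw
    obtain ⟨M, hM, hMeq⟩ := polymap_mvt F hF IV MJ hMJr hMJ w z (boxSet_seg hIV hw hz)
    set N : Matrix (Fin n) (Fin n) ℂ :=
      fun i k => (if i = k then 1 else 0) - ∑ j, Y i j * M j k with hN
    have hNmem : ∀ i k, N i k ∈ Bmat Y MJ i k := fun i k =>
      Set.sub_mem_sub (Set.mem_singleton _)
        (mem_finsetSum _ _ _ fun j _ => mem_cmul (Set.mem_singleton _) (hM j k))
    have hGNW : G z - G w = N.mulVec (fun k => z k - w k) := by
      funext i
      have e1 : (G z - G w) i = (z i - w i) - ∑ j, Y i j * (F z j - F w j) := by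
        show G z i - G w i = _
        rw [hGapply, hGapply]
        have : ∑ j, Y i j * F z j - ∑ j, Y i j * F w j
            = ∑ j, Y i j * (F z j - F w j) := by
          rw [← Finset.sum_sub_distrib]
          exact Finset.sum_congr rfl fun j _ => (mul_sub _ _ _).symm
        rw [← this]
        ring
      rw [e1]
      calc (z i - w i) - ∑ j, Y i j * (F z j - F w j)
          = (z i - w i) - ∑ j, Y i j * ∑ k, M j k * (z k - w k) := by
            congr 1
            exact Finset.sum_congr rfl fun j _ => by rw [hMeq j]
        _ = ∑ k, N i k * (z k - w k) := key_sum Y M (fun k => z k - w k) i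
        _ = N.mulVec (fun k => z k - w k) i := by
            rw [Matrix.mulVec, dotProduct]
    have hzw : (fun k => z k - w k) = z - w := rfl
    rw [hGNW, hzw]
    refine le_trans (norm_mulVec_le_opNormInf N _) ?_
    exact mul_le_mul_of_nonneg_right
      (opNormInf_le_imatNorm _ CB hCB0 hCB N hNmem) (norm_nonneg _)
  -- set up Banach fixed point
  have hclosed : IsClosed (boxSet IV) := by
    have : boxSet IV = ⋂ j, (fun z : Fin n → ℂ => z j) ⁻¹' IV j := by
      ext v; simp [boxSet, Set.mem_iInter]
    rw [this]
    exact isClosed_iInter fun j => (isRect_closed (hIV j)).preimage (continuous_apply j)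
  have hsc : IsComplete (boxSet IV) := hclosed.isComplete
  have hsf : Set.MapsTo G (boxSet IV) (boxSet IV) := hGmem
  set Kc : NNReal := ⟨max κ 0, le_max_right _ _⟩ with hKdef
  have hKcoe : (Kc : ℝ) = max κ 0 := rfl
  have hcontr : ContractingWith Kc (hsf.restrict G _ _) := by
    constructor
    · rw [← NNReal.coe_lt_coe, hKcoe, NNReal.coe_one]
      exact max_lt hκ1 one_pos
    · apply LipschitzWith.of_dist_le_mul
      rintro ⟨a, ha⟩ ⟨b, hb⟩
      have h1 : dist (hsf.restrict G _ _ ⟨a, ha⟩) (hsf.restrict G _ _ ⟨b, hb⟩)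
          = dist (G a) (G b) := by
        rw [Subtype.dist_eq]
        rfl
      rw [h1]
      have h2 : dist (⟨a, ha⟩ : boxSet IV) ⟨b, hb⟩ = dist a b := Subtype.dist_eq _ _
      rw [h2, hKcoe, dist_eq_norm, dist_eq_norm]
      calc ‖G a - G b‖ ≤ κ * ‖a - b‖ := hGlip a ha b hb
        _ ≤ max κ 0 * ‖a - b‖ :=
            mul_le_mul_of_nonneg_right (le_max_left _ _) (norm_nonneg _)
  obtain ⟨y, hys, hyfix, -, -⟩ :=
    hcontr.exists_fixedPoint' hsc hsf hx (edist_ne_top _ _)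
  have hYFy : Y.mulVec (F y) = 0 := by
    have h := hyfix
    rw [Function.IsFixedPt, hGdef] at h
    simpa [sub_eq_self] using h
  have hdet : IsUnit Y.det := (Matrix.isUnit_iff_isUnit_det Y).mp hY
  have hFy : F y = 0 := by
    have h1 : Y⁻¹ * Y = 1 := Matrix.nonsing_inv_mul Y hdet
    calc F y = (1 : Matrix (Fin n) (Fin n) ℂ).mulVec (F y) := (Matrix.one_mulVec _).symm
      _ = (Y⁻¹ * Y).mulVec (F y) := by rw [h1]
      _ = Y⁻¹.mulVec (Y.mulVec (F y)) := by rw [← Matrix.mulVec_mulVec]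
      _ = 0 := by rw [hYFy, Matrix.mulVec_zero]
  refine ⟨y, ⟨hys, hFy⟩, ?_⟩
  rintro z ⟨hzs, hz0⟩
  have hGz : G z = z := by simp [hGdef, hz0, Matrix.mulVec_zero]
  have hGy : G y = y := hyfix
  have hd : dist z y ≤ κ * dist z y := by
    calc dist z y = dist (G z) (G y) := by rw [hGz, hGy]
      _ = ‖G z - G y‖ := dist_eq_norm _ _
      _ ≤ κ * ‖z - y‖ := hGlip z hzs y hys
      _ = κ * dist z y := by rw [dist_eq_norm]
  have hd0 : dist z y ≤ 0 := by nlinarith [dist_nonneg (x := z) (y := y)]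
  exact dist_le_zero.mp hd0
theorem krawczyk_uniqueness (F : (Fin n → ℂ) → Fin n → ℂ) (hF : IsPolyMap F)
    (IV : Fin n → Set ℂ) (hIV : ∀ j, IsRect (IV j))
    (x : Fin n → ℂ) (hx : x ∈ boxSet IV)
    (Y : Matrix (Fin n) (Fin n) ℂ) (hY : IsUnit Y)
    (FX : Fin n → Set ℂ) (hFXr : ∀ j, IsRect (FX j)) (hFX : ∀ j, F x j ∈ FX j)
    (MJ : Fin n → Fin n → Set ℂ) (hMJr : ∀ i j, IsRect (MJ i j))
    (hMJ : ∀ z ∈ boxSet IV, ∀ i j, jac F z i j ∈ MJ i j)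
    (hK : ∀ i, Kset x Y FX MJ IV i ⊆ IV i)
    (hnorm : Real.sqrt 2 * imatNorm (Bmat Y MJ) < 1) :
    ∃! z, z ∈ boxSet IV ∧ F z = 0 := by
  exact krawczyk_uniqueness' F hF IV hIV x hx Y hY FX hFXr hFX MJ hMJr hMJ hK hnorm
end Norms
end
end
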